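/- Let q ≥ 2, t ≥ 1, n > 2t, and M with n - M - t ≥ 1. Then the ratio q^{Mt}[n-M choose t]_q / [n choose t]_q = Π_{i=1}^{t} (q^{n-t+i} - q^M)/(q^{n-t+i} - 1) is at least Π_{i=1}^{t} (1 - q^{-(1+i)}). -/

import Mathlib

/-- The Gaussian binomial coefficient, via the `q`-Pascal recurrence. -/
def gbinom (q : ℕ) : ℕ → ℕ → ℕ
  | _, 0 => 1
  | 0, _ + 1 => 0
  | n + 1, k + 1 => gbinom q n k + q ^ (k + 1) * gbinom q n (k + 1)

lemma gbinom_zero_right (q n : ℕ) : gbinom q n 0 = 1 := by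
  cases n <;> rfl

lemma gbinom_eq_zero (q : ℕ) : ∀ n k : ℕ, n < k → gbinom q n k = 0 := by
  intro n
  induction n with
  | zero => intro k hk; cases k with
    | zero => omega
    | succ k => rfl
  | succ n ih =>
    intro k hk
    cases k with
    | zero => omega
    | succ k =>
      show gbinom q n k + q ^ (k+1) * gbinom q n (k+1) = 0
      rw [ih k (by omega), ih (k+1) (by omega)]
      ring

lemma gbinom_self (q : ℕ) : ∀ n : ℕ, gbinom q n n = 1 := by
  intro n
  induction n with
  | zero => rfl
  | succ n ih =>
    show gbinom q n n + q ^ (n+1) * gbinom q n (n+1) = 1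
    rw [ih, gbinom_eq_zero q n (n+1) (by omega)]
    ring

lemma gbinom_pascal (q n k : ℕ) :
    gbinom q (n+1) (k+1) = gbinom q n k + q ^ (k+1) * gbinom q n (k+1) := rfl

lemma gbinom_step (q : ℕ) : ∀ n k : ℕ, k ≤ n →
    ((q:ℝ) ^ (k+1) - 1) * gbinom q (n+1) (k+1) =
      ((q:ℝ) ^ (n+1) - 1) * gbinom q n k := by
  intro n
  induction n with
  | zero =>
    intro k hk
    interval_cases k
    simp [gbinom_pascal, gbinom_zero_right, gbinom_self, gbinom_eq_zero q 0 1 (by omega)]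
  | succ n ih =>
    intro k hk
    cases k with
    | zero =>
      have h1 : (gbinom q (n+2) 1 : ℝ) = gbinom q (n+1) 0 + (q:ℝ)^1 * gbinom q (n+1) 1 := by
        rw [gbinom_pascal]; push_cast; ring
      have h3 := ih 0 (by omega)
      rw [gbinom_zero_right] at h1 h3 ⊢
      push_cast at h1 h3 ⊢
      linear_combination ((q:ℝ) - 1) * h1 + (q:ℝ) * h3
    | succ k =>
      rcases Nat.lt_or_ge k n with hkn | hkn
      · have h1 : (gbinom q (n+2) (k+2) : ℝ)
            = gbinom q (n+1) (k+1) + (q:ℝ)^(k+2) * gbinom q (n+1) (k+2) := by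
          rw [gbinom_pascal]; push_cast; ring
        have h2 := ih (k+1) (by omega)
        have h3 := ih k (by omega)
        have h4 : (gbinom q (n+1) (k+1) : ℝ)
            = gbinom q n k + (q:ℝ)^(k+1) * gbinom q n (k+1) := by
          rw [gbinom_pascal]; push_cast; ring
        push_cast at h2 h3 ⊢
        linear_combination ((q:ℝ)^(k+2) - 1) * h1 + (q:ℝ)^(k+2) * h2
          + (q:ℝ) * h3 - (q:ℝ) * ((q:ℝ)^(n+1) - 1) * h4
      · have hk' : k = n := by omega
        subst hk'
        rw [gbinom_self, gbinom_self]

lemma gbinom_closed (q : ℕ) (hq : 2 ≤ q) : ∀ t n : ℕ, t ≤ n →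
    (gbinom q n t : ℝ) =
      ∏ i ∈ Finset.Icc 1 t, (((q:ℝ) ^ (n - t + i) - 1) / ((q:ℝ) ^ i - 1)) := by
  have hx : (1:ℝ) < q := by exact_mod_cast hq.trans_lt' one_lt_two
  intro t
  induction t with
  | zero => intro n _; simp [gbinom_zero_right]
  | succ t ih =>
    intro n hn
    obtain ⟨m, rfl⟩ : ∃ m, n = m + 1 := ⟨n - 1, by omega⟩
    have ht : t ≤ m := by omega
    have hden : ((q:ℝ) ^ (t+1) - 1) ≠ 0 := by
      have : (1:ℝ) < (q:ℝ) ^ (t+1) := one_lt_pow₀ hx (by omega)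
      linarith
    have hstep := gbinom_step q m t ht
    have hprod : ∏ i ∈ Finset.Icc 1 (t+1), (((q:ℝ) ^ (m + 1 - (t+1) + i) - 1) / ((q:ℝ) ^ i - 1))
        = (∏ i ∈ Finset.Icc 1 t, (((q:ℝ) ^ (m - t + i) - 1) / ((q:ℝ) ^ i - 1)))
          * (((q:ℝ) ^ (m+1) - 1) / ((q:ℝ) ^ (t+1) - 1)) := by
      rw [Finset.prod_Icc_succ_top (by omega)]
      have e1 : m + 1 - (t+1) = m - t := by omega
      have e2 : m - t + (t+1) = m + 1 := by omega
      rw [e1, e2]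
    rw [hprod, ← ih m ht]
    field_simp
    linarith [hstep]

lemma factor_bound (x : ℝ) (hx : 2 ≤ x) (M a i : ℕ) (hi : 1 ≤ i) (ha : M + 1 + i ≤ a) :
    1 - x⁻¹ ^ (1 + i) ≤ (x ^ a - x ^ M) / (x ^ a - 1) := by
  have hx1 : (1:ℝ) < x := by linarith
  have hpa : (1:ℝ) < x ^ a := one_lt_pow₀ hx1 (by omega)
  have hpi : (1:ℝ) < x ^ (1 + i) := one_lt_pow₀ hx1 (by omega)
  have hmono : x ^ (M + 1 + i) ≤ x ^ a := pow_le_pow_right₀ (by linarith) ha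
  have hrw : 1 - x⁻¹ ^ (1 + i) = (x ^ (1+i) - 1) / x ^ (1+i) := by
    rw [inv_pow]
    field_simp
  rw [hrw, div_le_div_iff₀ (by linarith) (by linarith)]
  have hexp : x ^ (M + 1 + i) = x ^ M * x ^ (1 + i) := by
    rw [← pow_add]; ring_nf
  nlinarith [hmono, hexp]

theorem ratio_ge_prod (q t n M : ℕ) (hq : 2 ≤ q) (ht : 1 ≤ t)
    (hn : 2 * t < n) (hM : M + t + 1 ≤ n) :
    ∏ i ∈ Finset.Icc 1 t, (1 - ((q : ℝ)⁻¹) ^ (1 + i)) ≤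
      (q : ℝ) ^ (M * t) * gbinom q (n - M) t / gbinom q n t := by
  have hx : (2:ℝ) ≤ (q:ℝ) := by exact_mod_cast hq
  have hx1 : (1:ℝ) < (q:ℝ) := by linarith
  have htn : t ≤ n := by omega
  have htm : t ≤ n - M := by omega
  have key : (q : ℝ) ^ (M * t) * gbinom q (n - M) t / gbinom q n t
      = ∏ i ∈ Finset.Icc 1 t,
          ((q:ℝ) ^ M * ((q:ℝ) ^ (n - M - t + i) - 1) / ((q:ℝ) ^ (n - t + i) - 1)) := by
    rw [gbinom_closed q hq t n htn, gbinom_closed q hq t (n - M) htm]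
    have hcard : (q:ℝ) ^ (M * t) = ∏ _i ∈ Finset.Icc 1 t, (q:ℝ) ^ M := by
      rw [Finset.prod_const, Nat.card_Icc, ← pow_mul]
      norm_num [Nat.mul_comm]
    rw [hcard, ← Finset.prod_mul_distrib, ← Finset.prod_div_distrib]
    refine Finset.prod_congr rfl ?_
    intro i hi
    have hi1 : 1 ≤ i := (Finset.mem_Icc.mp hi).1
    have hdi : ((q:ℝ) ^ i - 1) ≠ 0 := by
      have : (1:ℝ) < (q:ℝ) ^ i := one_lt_pow₀ hx1 (by omega)
      linarith
    have hda : ((q:ℝ) ^ (n - t + i) - 1) ≠ 0 := by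
      have : (1:ℝ) < (q:ℝ) ^ (n - t + i) := one_lt_pow₀ hx1 (by omega)
      linarith
    field_simp
  rw [key]
  refine Finset.prod_le_prod ?_ ?_
  · intro i hi
    have hi1 : 1 ≤ i := (Finset.mem_Icc.mp hi).1
    have : (q:ℝ)⁻¹ ^ (1 + i) ≤ 1 := by
      apply pow_le_one₀
      · positivity
      · rw [inv_le_one_iff₀]; right; linarith  -- may need fixing
    linarith
  · intro i hi
    have hi1 : 1 ≤ i := (Finset.mem_Icc.mp hi).1
    have hexp : (q:ℝ) ^ M * ((q:ℝ) ^ (n - M - t + i) - 1)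
        = (q:ℝ) ^ (n - t + i) - (q:ℝ) ^ M := by
      rw [mul_sub, ← pow_add, mul_one]
      congr 2
      omega
    rw [mul_div_assoc] at *
    rw [← mul_div_assoc, hexp]
    exact factor_bound (q:ℝ) hx M (n - t + i) i hi1 (by omega)
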